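/- Let G be a topological group acting continuously on a topological space X, and suppose the action satisfies property (a): for every x ∈ X and every open neighborhood O of the identity in G, there exists y ∈ X with x ∈ interior(closure(O·y)). Then for every x ∈ X, either interior(closure(G·x)) = closure(G·x) or interior(closure(G·x)) = ∅. -/

import Mathlib

open Pointwise


theorem stmt2 {G X : Type*} [Group G] [TopologicalSpace G] [IsTopologicalGroup G]
    [TopologicalSpace X] [MulAction G X] [ContinuousSMul G X]
    (ha : ∀ (x : X) (O : Set G), IsOpen O → (1 : G) ∈ O →
      ∃ y : X, x ∈ interior (closure ((fun g => g • y) '' O)))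
    (x : X) :
    interior (closure (MulAction.orbit G x)) = closure (MulAction.orbit G x) ∨
    interior (closure (MulAction.orbit G x)) = ∅ := by
  set C := closure (MulAction.orbit G x) with hC
  by_cases hne : (interior C).Nonempty
  · left
    refine Set.Subset.antisymm interior_subset ?_
    have hCinv : ∀ g : G, g • C = C := by
      intro g
      rw [hC, ← closure_smul, MulAction.smul_orbit]
    have hUinv : ∀ g : G, g • interior C ⊆ interior C := by
      intro g
      rw [← interior_smul, hCinv]
    obtain ⟨u, hu⟩ := hne
    have huC : u ∈ C := interior_subset hu
    obtain ⟨z, hzU, g₀, rfl⟩ :=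
      _root_.mem_closure_iff.mp huC (interior C) isOpen_interior hu
    -- whole orbit lies in interior C
    have horb : ∀ g : G, g • x ∈ interior C := by
      intro g
      have : g • x = (g * g₀⁻¹) • (g₀ • x) := by
        rw [smul_smul, inv_mul_cancel_right]
      rw [this]
      exact hUinv _ ⟨g₀ • x, hzU, rfl⟩
    intro w hw
    obtain ⟨y, hy⟩ := ha w Set.univ isOpen_univ (Set.mem_univ 1)
    have himg : (fun g : G => g • y) '' Set.univ = MulAction.orbit G y := by
      rw [Set.image_univ]; rfl
    rw [himg] at hy
    -- the open set interior (closure (orbit y)) meets orbit x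
    obtain ⟨z, hzN, h, rfl⟩ :=
      _root_.mem_closure_iff.mp hw _ isOpen_interior hy
    have hhU : h • x ∈ interior C := horb h
    have hhcl : h • x ∈ closure (MulAction.orbit G y) := interior_subset hzN
    obtain ⟨v, hvU, g, rfl⟩ :=
      _root_.mem_closure_iff.mp hhcl (interior C) isOpen_interior hhU
    -- orbit y ⊆ C
    have horby : MulAction.orbit G y ⊆ C := by
      rintro _ ⟨k, rfl⟩
      show k • y ∈ C
      have : k • y = (k * g⁻¹) • (g • y) := by
        rw [smul_smul, inv_mul_cancel_right]
      rw [this]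
      exact interior_subset (hUinv _ ⟨g • y, hvU, rfl⟩)
    have : closure (MulAction.orbit G y) ⊆ C :=
      closure_minimal horby isClosed_closure
    exact interior_mono this hy
  · right
    exact Set.not_nonempty_iff_eq_empty.mp hne
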